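/- Let s ≥ 1 and let 𝔰 : ℚ[p₁,…,p_{2s}] → ℚ[p₁,…,p_s,p′₁,…,p′_s] be the ℚ-algebra homomorphism with 𝔰(p_i) = Σ_{j=0}^{i} p_j·p′_{i−j} (conventions: p₀ = p′₀ = 1 and p_j = 0, p′_j = 0 for j > s). Then 𝔰 is injective, and every element of the image of 𝔰 is invariant under the swap involution σ; that is, the image of 𝔰 is contained in the subalgebra 𝒮𝒫 = {f : σ f = f} of symmetric polynomials. -/

import Mathlib

open MvPolynomial

/-- `p_j` in `ℚ[p₁,…,p_s,p′₁,…,p′_s]` (the unprimed variables are indexed by `Sum.inl`),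
with the conventions `p₀ = 1` and `p_j = 0` for `j > s`. -/
noncomputable def pL (s : ℕ) (j : ℕ) : MvPolynomial (Fin s ⊕ Fin s) ℚ :=
  if h : 1 ≤ j ∧ j ≤ s then X (Sum.inl ⟨j - 1, by omega⟩)
  else if j = 0 then 1 else 0

/-- `p′_j` in `ℚ[p₁,…,p_s,p′₁,…,p′_s]` (the primed variables are indexed by `Sum.inr`),
with the conventions `p′₀ = 1` and `p′_j = 0` for `j > s`. -/
noncomputable def pR (s : ℕ) (j : ℕ) : MvPolynomial (Fin s ⊕ Fin s) ℚ :=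
  if h : 1 ≤ j ∧ j ≤ s then X (Sum.inr ⟨j - 1, by omega⟩)
  else if j = 0 then 1 else 0

/-- The splitting homomorphism `𝔰 : ℚ[p₁,…,p_{2s}] → ℚ[p₁,…,p_s,p′₁,…,p′_s]`, the
`ℚ`-algebra homomorphism determined by `𝔰(p_i) = ∑_{j=0}^{i} p_j·p′_{i−j}`.
(The variable of index `i : Fin (2*s)` is `p_{i+1}`.) -/
noncomputable def splitHom (s : ℕ) :
    MvPolynomial (Fin (2 * s)) ℚ →ₐ[ℚ] MvPolynomial (Fin s ⊕ Fin s) ℚ :=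
  aeval fun i : Fin (2 * s) =>
    ∑ j ∈ Finset.range ((i : ℕ) + 2), pL s j * pR s ((i : ℕ) + 1 - j)

section Aux

variable (s : ℕ)

noncomputable def eSL (j : ℕ) : MvPolynomial (Fin s ⊕ Fin s) ℚ :=
  rename Sum.inl (esymm (Fin s) ℚ j)

noncomputable def eSR (j : ℕ) : MvPolynomial (Fin s ⊕ Fin s) ℚ :=
  rename Sum.inr (esymm (Fin s) ℚ j)

lemma esymm_fin_zero {j : ℕ} (h : s < j) : esymm (Fin s) ℚ j = 0 := by
  rw [esymm, Finset.powersetCard_eq_empty.mpr (by simpa using h), Finset.sum_empty]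

lemma eSL_zero {j : ℕ} (h : s < j) : eSL s j = 0 := by
  rw [eSL, esymm_fin_zero s h, map_zero]

lemma eSR_zero {j : ℕ} (h : s < j) : eSR s j = 0 := by
  rw [eSR, esymm_fin_zero s h, map_zero]

noncomputable def QQ : Polynomial (MvPolynomial (Fin s) ℚ) :=
  ∏ a : Fin s, (Polynomial.X + Polynomial.C (X a))

lemma QQ_coeff (n : ℕ) :
    (QQ s).coeff n = if n ≤ s then esymm (Fin s) ℚ (s - n) else 0 := by
  split_ifs with h
  · have := MvPolynomial.prod_X_add_C_coeff ℚ (Fin s) (k := n) (by simpa using h)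
    simpa [QQ] using this
  · apply Polynomial.coeff_eq_zero_of_natDegree_lt
    have h1 : (QQ s).natDegree ≤ s := by
      rw [QQ]
      refine le_trans (Polynomial.natDegree_prod_le _ _) ?_
      simp [Polynomial.natDegree_X_add_C]
    omega

end Aux

section Aux2

variable (s : ℕ)

lemma PL_eq :
    (∏ a : Fin s, (Polynomial.X + Polynomial.C (X (Sum.inl a) : MvPolynomial (Fin s ⊕ Fin s) ℚ)))
      = (QQ s).map (rename (Sum.inl : Fin s → Fin s ⊕ Fin s)).toRingHom := by
  rw [QQ, Polynomial.map_prod]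
  exact Finset.prod_congr rfl fun a _ => by simp

lemma PR_eq :
    (∏ a : Fin s, (Polynomial.X + Polynomial.C (X (Sum.inr a) : MvPolynomial (Fin s ⊕ Fin s) ℚ)))
      = (QQ s).map (rename (Sum.inr : Fin s → Fin s ⊕ Fin s)).toRingHom := by
  rw [QQ, Polynomial.map_prod]
  exact Finset.prod_congr rfl fun a _ => by simp

lemma PL_coeff (n : ℕ) :
    ((QQ s).map (rename (Sum.inl : Fin s → Fin s ⊕ Fin s)).toRingHom).coeff n
      = if n ≤ s then eSL s (s - n) else 0 := by
  rw [Polynomial.coeff_map, QQ_coeff]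
  split_ifs <;> simp [eSL]

lemma PR_coeff (n : ℕ) :
    ((QQ s).map (rename (Sum.inr : Fin s → Fin s ⊕ Fin s)).toRingHom).coeff n
      = if n ≤ s then eSR s (s - n) else 0 := by
  rw [Polynomial.coeff_map, QQ_coeff]
  split_ifs <;> simp [eSR]

lemma conv {k : ℕ} (hk : k ≤ 2 * s) :
    esymm (Fin s ⊕ Fin s) ℚ k = ∑ j ∈ Finset.range (k + 1), eSL s j * eSR s (k - j) := by
  have hcard : Fintype.card (Fin s ⊕ Fin s) = 2 * s := by simp [two_mul]
  have h0 := MvPolynomial.prod_X_add_C_coeff ℚ (Fin s ⊕ Fin s) (k := 2 * s - k)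
    (by rw [hcard]; omega)
  rw [hcard] at h0
  have hkk : 2 * s - (2 * s - k) = k := by omega
  rw [hkk] at h0
  rw [← h0, Fintype.prod_sum_type, PL_eq, PR_eq, Polynomial.coeff_mul]
  rw [← Finset.Nat.sum_antidiagonal_eq_sum_range_succ (fun a b => eSL s a * eSR s b)]
  simp_rw [PL_coeff, PR_coeff]
  rw [← Finset.sum_filter_of_ne (p := fun p : ℕ × ℕ => p.1 ≤ s ∧ p.2 ≤ s)
    (by intro p _ hp; by_contra hc
        rcases not_and_or.mp hc with h | h
        · simp [if_neg h] at hp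
        · simp [if_neg h] at hp),
    ← Finset.sum_filter_of_ne (s := Finset.HasAntidiagonal.antidiagonal k)
      (f := fun p : ℕ × ℕ => eSL s p.1 * eSR s p.2)
      (p := fun p : ℕ × ℕ => p.1 ≤ s ∧ p.2 ≤ s)
    (by intro p _ hp; by_contra hc
        rcases not_and_or.mp hc with h | h
        · exact hp (show eSL s p.1 * eSR s p.2 = 0 by
            rw [eSL_zero s (by omega), zero_mul])
        · exact hp (show eSL s p.1 * eSR s p.2 = 0 by
            rw [eSR_zero s (by omega), mul_zero]))]
  refine Finset.sum_nbij' (fun p => (s - p.1, s - p.2)) (fun p => (s - p.1, s - p.2))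
    ?_ ?_ ?_ ?_ ?_
  · intro p hp
    simp only [Finset.mem_filter, Finset.HasAntidiagonal.mem_antidiagonal] at hp ⊢
    omega
  · intro p hp
    simp only [Finset.mem_filter, Finset.HasAntidiagonal.mem_antidiagonal] at hp ⊢
    omega
  · intro p hp
    simp only [Finset.mem_filter, Finset.HasAntidiagonal.mem_antidiagonal] at hp
    ext <;> simp <;> omega
  · intro p hp
    simp only [Finset.mem_filter, Finset.HasAntidiagonal.mem_antidiagonal] at hp
    ext <;> simp <;> omega
  · intro p hp
    simp only [Finset.mem_filter, Finset.HasAntidiagonal.mem_antidiagonal] at hp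
    rw [if_pos hp.2.1, if_pos hp.2.2]

end Aux2

section Aux3

variable (s : ℕ)

noncomputable def splitΦ : MvPolynomial (Fin s ⊕ Fin s) ℚ →ₐ[ℚ] MvPolynomial (Fin s ⊕ Fin s) ℚ :=
  aeval (Sum.elim (fun j : Fin s => eSL s ((j : ℕ) + 1)) (fun j : Fin s => eSR s ((j : ℕ) + 1)))

lemma splitΦ_pL (j : ℕ) : splitΦ s (pL s j) = eSL s j := by
  rw [pL]
  split_ifs with h h0
  · rw [splitΦ, aeval_X, Sum.elim_inl]
    show eSL s ((j - 1) + 1) = eSL s j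
    congr 1; omega
  · subst h0
    rw [map_one, eSL, esymm_zero, map_one]
  · rw [map_zero, eSL_zero s (by omega)]

lemma splitΦ_pR (j : ℕ) : splitΦ s (pR s j) = eSR s j := by
  rw [pR]
  split_ifs with h h0
  · rw [splitΦ, aeval_X, Sum.elim_inr]
    show eSR s ((j - 1) + 1) = eSR s j
    congr 1; omega
  · subst h0
    rw [map_one, eSR, esymm_zero, map_one]
  · rw [map_zero, eSR_zero s (by omega)]

lemma splitΦ_comp_splitHom :
    (splitΦ s).comp (splitHom s)
      = (Subalgebra.val _).comp (esymmAlgHom (Fin s ⊕ Fin s) ℚ (2 * s)) := by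
  apply MvPolynomial.algHom_ext
  intro i
  rw [AlgHom.comp_apply, AlgHom.comp_apply, splitHom, aeval_X, map_sum]
  simp_rw [map_mul, splitΦ_pL, splitΦ_pR]
  rw [← conv s (by have := i.2; omega)]
  rw [Subalgebra.coe_val, esymmAlgHom_apply, aeval_X]

lemma splitHom_injective : Function.Injective (splitHom s) := by
  have h1 : Function.Injective
      ((Subalgebra.val _).comp (esymmAlgHom (Fin s ⊕ Fin s) ℚ (2 * s))) := by
    rw [AlgHom.coe_comp]
    exact Subtype.val_injective.comp (esymmAlgHom_injective ℚ
      (by rw [Fintype.card_sum, Fintype.card_fin]; omega))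
  have h2 : Function.Injective (⇑(splitΦ s) ∘ ⇑(splitHom s)) := by
    rw [← AlgHom.coe_comp, splitΦ_comp_splitHom]
    exact h1
  exact Function.Injective.of_comp h2

lemma rename_swap_pL (j : ℕ) :
    rename (Sum.swap : Fin s ⊕ Fin s → Fin s ⊕ Fin s) (pL s j) = pR s j := by
  rw [pL, pR]
  split_ifs with h h0
  · rw [rename_X]; rfl
  · exact map_one _
  · exact map_zero _

lemma rename_swap_pR (j : ℕ) :
    rename (Sum.swap : Fin s ⊕ Fin s → Fin s ⊕ Fin s) (pR s j) = pL s j := by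
  rw [pL, pR]
  split_ifs with h h0
  · rw [rename_X]; rfl
  · exact map_one _
  · exact map_zero _

lemma splitHom_symm (a : MvPolynomial (Fin (2 * s)) ℚ) :
    rename (Sum.swap : Fin s ⊕ Fin s → Fin s ⊕ Fin s) (splitHom s a) = splitHom s a := by
  have h : (MvPolynomial.rename (Sum.swap : Fin s ⊕ Fin s → Fin s ⊕ Fin s)
      : MvPolynomial (Fin s ⊕ Fin s) ℚ →ₐ[ℚ] _).comp (splitHom s) = splitHom s := by
    apply MvPolynomial.algHom_ext
    intro i
    rw [AlgHom.comp_apply, splitHom, aeval_X, map_sum]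
    simp_rw [map_mul, rename_swap_pL, rename_swap_pR]
    have hc : ∀ j ∈ Finset.range ((i : ℕ) + 2),
        pR s j * pL s ((i : ℕ) + 1 - j)
          = (fun j => pL s j * pR s ((i : ℕ) + 1 - j)) ((i : ℕ) + 2 - 1 - j) := by
      intro j hj
      rw [Finset.mem_range] at hj
      show _ = pL s ((i : ℕ) + 2 - 1 - j) * pR s ((i : ℕ) + 1 - ((i : ℕ) + 2 - 1 - j))
      rw [mul_comm]
      congr 2 <;> omega
    rw [Finset.sum_congr rfl hc]
    exact Finset.sum_range_reflect (fun j => pL s j * pR s ((i : ℕ) + 1 - j)) ((i : ℕ) + 2)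
  exact DFunLike.congr_fun h a

end Aux3


/-- The splitting homomorphism `𝔰` is injective, and every element of its image is
invariant under the swap involution `σ` exchanging `p_i` and `p′_i`. -/
theorem stmt0 (s : ℕ) (hs : 1 ≤ s) :
    Function.Injective (splitHom s) ∧
      ∀ a : MvPolynomial (Fin (2 * s)) ℚ,
        rename (Sum.swap : Fin s ⊕ Fin s → Fin s ⊕ Fin s) (splitHom s a) = splitHom s a := by
  exact ⟨splitHom_injective s, splitHom_symm s⟩
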